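/- Let C be a reduced combinatorial code on n neurons, let i ∈ [n], and let f_i be the i-th covering map f_i(c) = (c ∖ {i}) ∪ {n+j : j ∈ [n], {i,j} ⊆ c, tk_C({i,j}) ≠ tk_C({i})}. Then for any two distinct codewords σ, τ ∈ C, one has f_i(σ) = f_i(τ) if and only if {σ, τ} = {√[C]{i} ∖ {i}, √[C]{i}}. -/
import Mathlib


/-- The trunk of `τ` in the code `C`: all codewords containing `τ`. -/
def trunk {n : ℕ} (C : Finset (Finset (Fin n))) (τ : Finset (Fin n)) :
    Finset (Finset (Fin n)) :=
  C.filter (fun σ => τ ⊆ σ)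

/-- The root of a family of subsets: the intersection of all its members. -/
def root {n : ℕ} (S : Finset (Finset (Fin n))) : Finset (Fin n) :=
  S.inf id

/-- The root of `τ` relative to `C`. -/
def rootRel {n : ℕ} (C : Finset (Finset (Fin n))) (τ : Finset (Fin n)) :
    Finset (Fin n) :=
  root (trunk C τ)

/-- A code is reduced if it has no trivial neurons (empty trunks) and no
redundant neurons. -/
def Reduced {n : ℕ} (C : Finset (Finset (Fin n))) : Prop :=
  (∀ i : Fin n, (trunk C {i}).Nonempty) ∧
    ∀ i : Fin n, ¬ ∃ σ : Finset (Fin n), i ∉ σ ∧ trunk C {i} = trunk C σ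

/-- The `i`-th covering map `f_i : C → 2^[2n]`,
`f_i(c) = (c ∖ {i}) ∪ {n+j : {i,j} ⊆ c, tk_C({i,j}) ≠ tk_C({i})}`, where the
ground set `[2n]` is encoded as `Fin n ⊕ Fin n` (`inl` for the original neurons,
`inr j` for the new neuron `n + j`). -/
def coveringMap {n : ℕ} (C : Finset (Finset (Fin n))) (i : Fin n)
    (c : Finset (Fin n)) : Finset (Fin n ⊕ Fin n) :=
  (c.erase i).image Sum.inl ∪
    ((Finset.univ.filter (fun j : Fin n =>
        ({i, j} : Finset (Fin n)) ⊆ c ∧ trunk C {i, j} ≠ trunk C {i})).image Sum.inr)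

lemma mem_root_iff {n : ℕ} (S : Finset (Finset (Fin n))) (x : Fin n) :
    x ∈ root S ↔ ∀ s ∈ S, x ∈ s := by
  simp [root, Finset.mem_inf]

lemma coveringMap_eq_iff {n : ℕ} (C : Finset (Finset (Fin n))) (i : Fin n)
    (a b : Finset (Fin n)) :
    coveringMap C i a = coveringMap C i b ↔
      a.erase i = b.erase i ∧
      (Finset.univ.filter (fun j : Fin n =>
        ({i, j} : Finset (Fin n)) ⊆ a ∧ trunk C {i, j} ≠ trunk C {i})) =
      (Finset.univ.filter (fun j : Fin n =>
        ({i, j} : Finset (Fin n)) ⊆ b ∧ trunk C {i, j} ≠ trunk C {i})) := by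
  constructor
  · intro h
    constructor
    · ext j
      have := Finset.ext_iff.mp h (Sum.inl j)
      simpa [coveringMap] using this
    · ext j
      have := Finset.ext_iff.mp h (Sum.inr j)
      simpa [coveringMap] using this
  · rintro ⟨h1, h2⟩
    unfold coveringMap
    rw [h1, h2]

/-- Strong collision lemma: for a reduced code `C`, two distinct codewords `σ, τ`
collide under the `i`-th covering map iff `{σ, τ} = {√[C]{i} ∖ {i}, √[C]{i}}`. -/
theorem coveringMap_strong_collision (n : ℕ) (C : Finset (Finset (Fin n)))
    (i : Fin n) (hC : Reduced C) (σ τ : Finset (Fin n))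
    (hσ : σ ∈ C) (hτ : τ ∈ C) (hne : σ ≠ τ) :
    coveringMap C i σ = coveringMap C i τ ↔
      ({σ, τ} : Finset (Finset (Fin n))) =
        {(rootRel C {i}).erase i, rootRel C {i}} := by
  set ρ := rootRel C {i} with hρdef
  have hmem : ∀ x : Fin n, x ∈ ρ ↔ ∀ s ∈ trunk C {i}, x ∈ s := fun x =>
    mem_root_iff _ x
  have hmemtk : ∀ (t s : Finset (Fin n)), s ∈ trunk C t ↔ s ∈ C ∧ t ⊆ s := by
    intro t s; simp [trunk]
  have hiρ : i ∈ ρ := by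
    rw [hmem]
    intro s hs
    exact ((hmemtk _ _).mp hs).2 (Finset.mem_singleton_self i)
  have htk : ∀ j : Fin n, trunk C {i, j} = trunk C {i} ↔ j ∈ ρ := by
    intro j
    constructor
    · intro h
      rw [hmem]
      intro s hs
      rw [← h] at hs
      exact ((hmemtk _ _).mp hs).2 (by simp)
    · intro hj
      apply Finset.Subset.antisymm
      · intro s hs
        obtain ⟨hsC, hsub⟩ := (hmemtk _ _).mp hs
        exact (hmemtk _ _).mpr ⟨hsC, Finset.singleton_subset_iff.mpr (hsub (by simp))⟩
      · intro s hs
        obtain ⟨hsC, hsub⟩ := (hmemtk _ _).mp hs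
        have hjs : j ∈ s := (hmem j).mp hj s hs
        refine (hmemtk _ _).mpr ⟨hsC, ?_⟩
        intro x hx
        rcases Finset.mem_insert.mp hx with h | h
        · exact h ▸ hsub (Finset.mem_singleton_self i)
        · exact (Finset.mem_singleton.mp h) ▸ hjs
  have hρsub : ∀ s ∈ C, i ∈ s → ρ ⊆ s := by
    intro s hs hi x hx
    exact (hmem x).mp hx s ((hmemtk _ _).mpr ⟨hs, Finset.singleton_subset_iff.mpr hi⟩)
  rw [coveringMap_eq_iff]
  have main : ∀ a b : Finset (Fin n), a ∈ C → i ∈ a → i ∉ b →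
      a.erase i = b.erase i →
      (Finset.univ.filter (fun j : Fin n =>
        ({i, j} : Finset (Fin n)) ⊆ a ∧ trunk C {i, j} ≠ trunk C {i})) =
      (Finset.univ.filter (fun j : Fin n =>
        ({i, j} : Finset (Fin n)) ⊆ b ∧ trunk C {i, j} ≠ trunk C {i})) →
      a = ρ ∧ b = ρ.erase i := by
    intro a b ha hia hib h1 h2
    have hb' : b = a.erase i := (h1.trans (Finset.erase_eq_self.mpr hib)).symm
    have haρ : a = ρ := by
      apply Finset.Subset.antisymm _ (hρsub a ha hia)
      intro j hj
      by_contra hjρ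
      have hne' : trunk C {i, j} ≠ trunk C {i} := fun h => hjρ ((htk j).mp h)
      have hsub : ({i, j} : Finset (Fin n)) ⊆ a := by
        intro x hx
        rcases Finset.mem_insert.mp hx with h | h
        · exact h ▸ hia
        · exact (Finset.mem_singleton.mp h) ▸ hj
      have : j ∈ (Finset.univ.filter (fun j : Fin n =>
          ({i, j} : Finset (Fin n)) ⊆ a ∧ trunk C {i, j} ≠ trunk C {i})) :=
        Finset.mem_filter.mpr ⟨Finset.mem_univ j, hsub, hne'⟩
      rw [h2] at this
      have := (Finset.mem_filter.mp this).2.1 (Finset.mem_insert_self i {j})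
      exact hib this
    exact ⟨haρ, by rw [hb', haρ]⟩
  constructor
  · rintro ⟨h1, h2⟩
    by_cases hiσ : i ∈ σ
    · have hiτ : i ∉ τ := by
        intro hiτ
        exact hne (by rw [← Finset.insert_erase hiσ, h1, Finset.insert_erase hiτ])
      obtain ⟨hA, hB⟩ := main σ τ hσ hiσ hiτ h1 h2
      rw [hA, hB, Finset.pair_comm]
    · have hiτ : i ∈ τ := by
        by_contra hiτ
        exact hne (by
          rw [← Finset.erase_eq_self.mpr hiσ, h1, Finset.erase_eq_self.mpr hiτ])
      obtain ⟨hA, hB⟩ := main τ σ hτ hiτ hiσ h1.symm h2.symm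
      rw [hA, hB]
  · intro h
    have hσ' : σ = ρ.erase i ∨ σ = ρ := by
      have : σ ∈ ({ρ.erase i, ρ} : Finset (Finset (Fin n))) :=
        h ▸ Finset.mem_insert_self σ {τ}
      simpa using this
    have hτ' : τ = ρ.erase i ∨ τ = ρ := by
      have : τ ∈ ({ρ.erase i, ρ} : Finset (Finset (Fin n))) :=
        h ▸ Finset.mem_insert.mpr (Or.inr (Finset.mem_singleton_self τ))
      simpa using this
    have hfρ : (Finset.univ.filter (fun j : Fin n =>
        ({i, j} : Finset (Fin n)) ⊆ ρ ∧ trunk C {i, j} ≠ trunk C {i})) = ∅ := by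
      rw [Finset.filter_eq_empty_iff]
      rintro j - ⟨hsub, hne'⟩
      exact hne' ((htk j).mpr (hsub (by simp)))
    have hfρe : (Finset.univ.filter (fun j : Fin n =>
        ({i, j} : Finset (Fin n)) ⊆ ρ.erase i ∧ trunk C {i, j} ≠ trunk C {i})) = ∅ := by
      rw [Finset.filter_eq_empty_iff]
      rintro j - ⟨hsub, -⟩
      exact (Finset.notMem_erase i ρ) (hsub (Finset.mem_insert_self i {j}))
    rcases hσ' with h1 | h1 <;> rcases hτ' with h2 | h2
    · exact absurd (h1.trans h2.symm) hne
    · subst h1; subst h2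
      exact ⟨by rw [Finset.erase_idem], by rw [hfρe, hfρ]⟩
    · subst h1; subst h2
      exact ⟨by rw [Finset.erase_idem], by rw [hfρe, hfρ]⟩
    · exact absurd (h1.trans h2.symm) hne
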